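/- For each t ∈ {0,1,…,T−1} and each k ∈ ℕ, there exists a control limit δ ∈ ℕ with 0 < δ ≤ ξ such that for every x ∈ ℕ with x < ξ, preventive replacement is optimal at (x,k) — i.e. c_p + E_{(Z,K)}[Ṽ_{t+1}(Z, k+Z+K)] ≤ E_{(Z,K)}[Ṽ_{t+1}(x+Z, k+Z+K)] — if and only if x ≥ δ. -/

import Mathlib

open Filter

/-- Negative Binomial pmf with real shape `r` and success probability `p`:
`NB(r,p)(z) = Γ(z+r)/(Γ(r)·z!)·p^r·(1−p)^z` for `r > 0`, and `NB(0,p)` is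
the point mass at `0`. -/
noncomputable def NB (r p : ℝ) (z : ℕ) : ℝ :=
  if r = 0 then (if z = 0 then (1 : ℝ) else 0)
  else Real.Gamma ((z : ℝ) + r) / (Real.Gamma r * (Nat.factorial z : ℝ)) * p ^ r * (1 - p) ^ z

/-- `p_t = (β0 + N·t)/(β0 + N·t + 1)`. -/
noncomputable def pt (β0 : ℝ) (N t : ℕ) : ℝ :=
  (β0 + (N : ℝ) * (t : ℝ)) / (β0 + (N : ℝ) * (t : ℝ) + 1)

/-- Expectation `E_{(Z,K)}[f(Z,K)]` with `Z ~ NB(α0+k, p_t)` and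
`K ~ NB((N−1)(α0+k), p_t)` independent. -/
noncomputable def EZK (α0 β0 : ℝ) (N t k : ℕ) (f : ℕ → ℕ → ℝ) : ℝ :=
  ∑' z : ℕ, ∑' κ : ℕ,
    NB (α0 + (k : ℝ)) (pt β0 N t) z * NB (((N : ℝ) - 1) * (α0 + (k : ℝ))) (pt β0 N t) κ * f z κ

open MeasureTheory Set

lemma NB_nonneg {r p : ℝ} (hr : 0 ≤ r) (hp0 : 0 < p) (hp1 : p < 1) (z : ℕ) : 0 ≤ NB r p z := by
  by_cases h : r = 0
  · simp only [NB, if_pos h]; split <;> norm_num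
  · have hr' : 0 < r := hr.lt_of_ne (Ne.symm h)
    rw [NB, if_neg h]
    have h1 : 0 < Real.Gamma ((z:ℝ) + r) := Real.Gamma_pos_of_pos (by positivity)
    have h2 : 0 < Real.Gamma r := Real.Gamma_pos_of_pos hr'
    have h3 : (0:ℝ) < (Nat.factorial z : ℝ) := by exact_mod_cast Nat.factorial_pos z
    have h4 : (0:ℝ) < p ^ r := Real.rpow_pos_of_pos hp0 r
    have h5 : (0:ℝ) ≤ (1-p)^z := pow_nonneg (by linarith) z
    exact mul_nonneg (mul_nonneg (div_nonneg h1.le (mul_nonneg h2.le h3.le)) h4.le) h5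

lemma NB_succ {r p : ℝ} (hr : 0 < r) (z : ℕ) :
    NB r p (z+1) = (((z:ℝ)+r) * (1-p) / ((z:ℝ)+1)) * NB r p z := by
  have hzr : (0:ℝ) < (z:ℝ) + r := by positivity
  simp only [NB, if_neg hr.ne']
  have h1 : (((z+1 : ℕ) : ℝ)) + r = ((z:ℝ) + r) + 1 := by push_cast; ring
  rw [h1, Real.Gamma_add_one hzr.ne']
  have h2 : ((Nat.factorial (z+1) : ℕ) : ℝ) = ((z:ℝ)+1) * (Nat.factorial z : ℝ) := by
    rw [Nat.factorial_succ]; push_cast; ring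
  rw [h2, pow_succ]
  have h3 : Real.Gamma r ≠ 0 := (Real.Gamma_pos_of_pos hr).ne'
  have h4 : (Nat.factorial z : ℝ) ≠ 0 := Nat.cast_ne_zero.mpr (Nat.factorial_ne_zero z)
  have h5 : ((z:ℝ)+1) ≠ 0 := by positivity
  field_simp

lemma NB_summable {r p : ℝ} (hr : 0 ≤ r) (hp0 : 0 < p) (hp1 : p < 1) : Summable (NB r p) := by
  by_cases h : r = 0
  · apply summable_of_ne_finset_zero (s := ({0} : Finset ℕ))
    intro b hb
    simp only [Finset.mem_singleton] at hb
    simp [NB, h, hb]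
  · have hr' : 0 < r := hr.lt_of_ne (Ne.symm h)
    apply summable_of_ratio_norm_eventually_le (r := 1 - p/2) (by linarith)
    rw [eventually_atTop]
    refine ⟨⌈2*r/p⌉₊, fun z hz => ?_⟩
    have hz' : 2*r/p ≤ (z:ℝ) := Nat.ceil_le.mp hz
    have hzp : 2*r ≤ (z:ℝ)*p := by rw [div_le_iff₀ hp0] at hz'; linarith
    have hnn := NB_nonneg hr'.le hp0 hp1 (p := p)
    rw [Real.norm_of_nonneg (hnn _), Real.norm_of_nonneg (hnn _), NB_succ hr']
    apply mul_le_mul_of_nonneg_right _ (hnn z)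
    rw [div_le_iff₀ (by positivity : (0:ℝ) < (z:ℝ)+1)]
    nlinarith [mul_pos hr' hp0]


lemma rpow_aemeas (c : ℝ) :
    AEMeasurable (fun x : ℝ => x ^ c) (volume.restrict (Ioi (0:ℝ))) := by
  refine ContinuousOn.aemeasurable ?_ measurableSet_Ioi
  intro x hx
  exact (Real.continuousAt_rpow_const x c (Or.inl (ne_of_gt hx))).continuousWithinAt

lemma core_aemeas (c : ℝ) :
    AEMeasurable (fun x : ℝ => ENNReal.ofReal (Real.exp (-x) * x ^ c))
      (volume.restrict (Ioi (0:ℝ))) :=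
  ENNReal.measurable_ofReal.comp_aemeasurable
    (((Real.continuous_exp.comp continuous_neg).aemeasurable).mul (rpow_aemeas c))

lemma gamma_lint {s : ℝ} (hs : 0 < s) :
    ENNReal.ofReal (Real.Gamma s)
      = ∫⁻ x in Ioi (0:ℝ), ENNReal.ofReal (Real.exp (-x) * x ^ (s-1)) := by
  rw [Real.Gamma_eq_integral hs]
  rw [MeasureTheory.ofReal_integral_eq_lintegral_ofReal (Real.GammaIntegral_convergent hs)]
  rw [EventuallyLE, ae_restrict_iff' measurableSet_Ioi]
  exact ae_of_all _ (fun x hx =>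
    mul_nonneg (Real.exp_nonneg _) (Real.rpow_nonneg (le_of_lt hx) _))

lemma NB_tsum_one {r p : ℝ} (hr : 0 ≤ r) (hp0 : 0 < p) (hp1 : p < 1) :
    ∑' z : ℕ, NB r p z = 1 := by
  by_cases h : r = 0
  · rw [tsum_eq_single 0 (fun b hb => by simp [NB, h, hb])]
    simp [NB, h]
  have hr' : 0 < r := hr.lt_of_ne (Ne.symm h)
  set q := 1 - p with hq
  have hq0 : 0 < q := by simp only [hq]; linarith
  have hΓr : 0 < Real.Gamma r := Real.Gamma_pos_of_pos hr'
  have hpr : 0 < p ^ r := Real.rpow_pos_of_pos hp0 r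
  -- summability of the unnormalized series
  have hSsum : Summable (fun z : ℕ => Real.Gamma ((z:ℝ)+r) / (Nat.factorial z : ℝ) * q ^ z) := by
    refine ((NB_summable hr hp0 hp1).mul_right (Real.Gamma r / p ^ r)).congr (fun z => ?_)
    simp only [NB, if_neg h, ← hq]
    field_simp
  have hSnn : ∀ z : ℕ, 0 ≤ Real.Gamma ((z:ℝ)+r) / (Nat.factorial z : ℝ) * q ^ z := by
    intro z
    have h1 : 0 < Real.Gamma ((z:ℝ) + r) := Real.Gamma_pos_of_pos (by positivity)
    have h3 : (0:ℝ) < (Nat.factorial z : ℝ) := by exact_mod_cast Nat.factorial_pos z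
    positivity
  -- per-z lintegral representation
  have step_z : ∀ z : ℕ,
      ENNReal.ofReal (Real.Gamma ((z:ℝ)+r) / (Nat.factorial z : ℝ) * q ^ z)
        = ∫⁻ x in Ioi (0:ℝ),
            ENNReal.ofReal (q^z / (Nat.factorial z : ℝ) * (Real.exp (-x) * x ^ ((z:ℝ)+r-1))) := by
    intro z
    have hc : (0:ℝ) ≤ q^z / (Nat.factorial z : ℝ) := by positivity
    have e1 : Real.Gamma ((z:ℝ)+r) / (Nat.factorial z : ℝ) * q ^ z
        = q^z / (Nat.factorial z : ℝ) * Real.Gamma ((z:ℝ)+r) := by ring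
    rw [e1, ENNReal.ofReal_mul hc, gamma_lint (by positivity : (0:ℝ) < (z:ℝ)+r),
      ← MeasureTheory.lintegral_const_mul'' _ (core_aemeas ((z:ℝ)+r-1))]
    exact lintegral_congr (fun x => (ENNReal.ofReal_mul hc).symm)
  have hmeas : ∀ z : ℕ, AEMeasurable
      (fun x : ℝ => ENNReal.ofReal (q^z / (Nat.factorial z : ℝ) * (Real.exp (-x) * x ^ ((z:ℝ)+r-1))))
      (volume.restrict (Ioi (0:ℝ))) := by
    intro z
    have hc : (0:ℝ) ≤ q^z / (Nat.factorial z : ℝ) := by positivity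
    have : (fun x : ℝ => ENNReal.ofReal (q^z / (Nat.factorial z : ℝ) * (Real.exp (-x) * x ^ ((z:ℝ)+r-1))))
        = fun x : ℝ => ENNReal.ofReal (q^z / (Nat.factorial z : ℝ)) * ENNReal.ofReal (Real.exp (-x) * x ^ ((z:ℝ)+r-1)) :=
      funext fun x => ENNReal.ofReal_mul hc
    rw [this]
    exact (core_aemeas _).const_mul _
  -- pointwise summation under the integral
  have pointwise : ∀ x : ℝ, x ∈ Ioi (0:ℝ) →
      (∑' z : ℕ, ENNReal.ofReal (q^z / (Nat.factorial z : ℝ) * (Real.exp (-x) * x ^ ((z:ℝ)+r-1))))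
        = ENNReal.ofReal (x ^ (r-1) * Real.exp (-(p*x))) := by
    intro x hx
    have hxp : (0:ℝ) < x := hx
    have hterm : ∀ z : ℕ, q^z / (Nat.factorial z : ℝ) * (Real.exp (-x) * x ^ ((z:ℝ)+r-1))
        = (q*x)^z / (Nat.factorial z : ℝ) * (Real.exp (-x) * x ^ (r-1)) := by
      intro z
      rw [show ((z:ℝ)+r-1) = (z:ℝ) + (r-1) by ring, Real.rpow_add hxp, Real.rpow_natCast, mul_pow]
      ring
    have hnn : ∀ z : ℕ, 0 ≤ (q*x)^z / (Nat.factorial z : ℝ) * (Real.exp (-x) * x ^ (r-1)) :=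
      fun z => mul_nonneg
        (div_nonneg (pow_nonneg (mul_nonneg hq0.le hxp.le) _) (Nat.cast_nonneg _))
        (mul_nonneg (Real.exp_nonneg _) (Real.rpow_nonneg hxp.le _))
    have hexp : (∑' z : ℕ, (q*x)^z / (Nat.factorial z : ℝ)) = Real.exp (q*x) := by
      rw [Real.exp_eq_exp_ℝ, NormedSpace.exp_eq_tsum_div]
    calc (∑' z : ℕ, ENNReal.ofReal (q^z / (Nat.factorial z : ℝ) * (Real.exp (-x) * x ^ ((z:ℝ)+r-1))))
        = ∑' z : ℕ, ENNReal.ofReal ((q*x)^z / (Nat.factorial z : ℝ) * (Real.exp (-x) * x ^ (r-1))) :=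
          tsum_congr (fun z => by rw [hterm z])
      _ = ENNReal.ofReal (∑' z : ℕ, (q*x)^z / (Nat.factorial z : ℝ) * (Real.exp (-x) * x ^ (r-1))) :=
          (ENNReal.ofReal_tsum_of_nonneg hnn
            ((Real.summable_pow_div_factorial (q*x)).mul_right _)).symm
      _ = ENNReal.ofReal (x ^ (r-1) * Real.exp (-(p*x))) := by
          rw [tsum_mul_right, hexp]
          congr 1
          rw [show -(p*x) = q*x + -x by simp only [hq]; ring, Real.exp_add]
          ring
  -- the final integral
  have final_int : (∫⁻ x in Ioi (0:ℝ), ENNReal.ofReal (x ^ (r-1) * Real.exp (-(p*x))))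
      = ENNReal.ofReal (Real.Gamma r * (1/p) ^ r) := by
    have hint : (∫ x in Ioi (0:ℝ), x ^ (r-1) * Real.exp (-(p*x)))
        = (1/p) ^ r * Real.Gamma r := Real.integral_rpow_mul_exp_neg_mul_Ioi hr' hp0
    have hmeasf : AEStronglyMeasurable (fun x : ℝ => x ^ (r-1) * Real.exp (-(p*x)))
        (volume.restrict (Ioi (0:ℝ))) := by
      refine ContinuousOn.aestronglyMeasurable ?_ measurableSet_Ioi
      refine ContinuousOn.mul ?_ (Continuous.continuousOn (by continuity))
      intro x hx
      exact (Real.continuousAt_rpow_const x _ (Or.inl (ne_of_gt hx))).continuousWithinAt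
    have hnnae : 0 ≤ᵐ[volume.restrict (Ioi (0:ℝ))] fun x : ℝ => x ^ (r-1) * Real.exp (-(p*x)) := by
      rw [EventuallyLE, ae_restrict_iff' measurableSet_Ioi]
      exact ae_of_all _ (fun x hx =>
        mul_nonneg (Real.rpow_nonneg (le_of_lt hx) _) (Real.exp_nonneg _))
    have heq := MeasureTheory.integral_eq_lintegral_of_nonneg_ae hnnae hmeasf
    rw [hint] at heq
    have hIne : (∫⁻ x in Ioi (0:ℝ), ENNReal.ofReal (x ^ (r-1) * Real.exp (-(p*x)))) ≠ ⊤ := by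
      intro htop
      rw [htop, ENNReal.toReal_top] at heq
      have : 0 < (1/p) ^ r * Real.Gamma r :=
        mul_pos (Real.rpow_pos_of_pos (by positivity) r) hΓr
      linarith
    rw [← ENNReal.ofReal_toReal hIne, ← heq, mul_comm]
  -- assemble in ℝ≥0∞
  have chain : ENNReal.ofReal (∑' z : ℕ, Real.Gamma ((z:ℝ)+r) / (Nat.factorial z : ℝ) * q ^ z)
      = ENNReal.ofReal (Real.Gamma r * (1/p) ^ r) := by
    calc ENNReal.ofReal (∑' z : ℕ, Real.Gamma ((z:ℝ)+r) / (Nat.factorial z : ℝ) * q ^ z)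
        = ∑' z : ℕ, ENNReal.ofReal (Real.Gamma ((z:ℝ)+r) / (Nat.factorial z : ℝ) * q ^ z) :=
          ENNReal.ofReal_tsum_of_nonneg hSnn hSsum
      _ = ∑' z : ℕ, ∫⁻ x in Ioi (0:ℝ),
            ENNReal.ofReal (q^z / (Nat.factorial z : ℝ) * (Real.exp (-x) * x ^ ((z:ℝ)+r-1))) :=
          tsum_congr step_z
      _ = ∫⁻ x in Ioi (0:ℝ), ∑' z : ℕ,
            ENNReal.ofReal (q^z / (Nat.factorial z : ℝ) * (Real.exp (-x) * x ^ ((z:ℝ)+r-1))) :=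
          (MeasureTheory.lintegral_tsum hmeas).symm
      _ = ∫⁻ x in Ioi (0:ℝ), ENNReal.ofReal (x ^ (r-1) * Real.exp (-(p*x))) := by
          refine lintegral_congr_ae ?_
          filter_upwards [ae_restrict_mem measurableSet_Ioi] with x hx using pointwise x hx
      _ = ENNReal.ofReal (Real.Gamma r * (1/p) ^ r) := final_int
  have hS0 : 0 ≤ ∑' z : ℕ, Real.Gamma ((z:ℝ)+r) / (Nat.factorial z : ℝ) * q ^ z :=
    tsum_nonneg hSnn
  have key : (∑' z : ℕ, Real.Gamma ((z:ℝ)+r) / (Nat.factorial z : ℝ) * q ^ z)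
      = Real.Gamma r * (1/p) ^ r := by
    have h2 : 0 ≤ Real.Gamma r * (1/p) ^ r :=
      mul_nonneg hΓr.le (Real.rpow_nonneg (by positivity) r)
    exact (ENNReal.ofReal_eq_ofReal_iff hS0 h2).mp chain
  calc (∑' z : ℕ, NB r p z)
      = ∑' z : ℕ, (p^r / Real.Gamma r) * (Real.Gamma ((z:ℝ)+r) / (Nat.factorial z : ℝ) * q ^ z) :=
        tsum_congr (fun z => by
          simp only [NB, if_neg h, ← hq]
          field_simp)
    _ = (p^r / Real.Gamma r) * (∑' z : ℕ, Real.Gamma ((z:ℝ)+r) / (Nat.factorial z : ℝ) * q ^ z) :=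
        tsum_mul_left
    _ = 1 := by
        rw [key, one_div, Real.inv_rpow hp0.le]
        field_simp

section Weights
variable {w1 w2 : ℕ → ℝ} {M : ℝ}

lemma inner_summable' (h1n : ∀ z, 0 ≤ w1 z) (h2n : ∀ κ, 0 ≤ w2 κ) (h2s : Summable w2)
    {f : ℕ → ℕ → ℝ} (h0 : ∀ z κ, 0 ≤ f z κ) (hM : ∀ z κ, f z κ ≤ M) (z : ℕ) :
    Summable (fun κ => w1 z * w2 κ * f z κ) := by
  refine Summable.of_nonneg_of_le
    (fun κ => mul_nonneg (mul_nonneg (h1n z) (h2n κ)) (h0 z κ)) (fun κ => ?_)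
    (h2s.mul_left (w1 z * M))
  calc w1 z * w2 κ * f z κ ≤ w1 z * w2 κ * M :=
        mul_le_mul_of_nonneg_left (hM z κ) (mul_nonneg (h1n z) (h2n κ))
    _ = w1 z * M * w2 κ := by ring

lemma inner_tsum_le' (h1n : ∀ z, 0 ≤ w1 z) (h2n : ∀ κ, 0 ≤ w2 κ) (h2s : Summable w2)
    (h2t : ∑' κ, w2 κ = 1)
    {f : ℕ → ℕ → ℝ} (h0 : ∀ z κ, 0 ≤ f z κ) (hM : ∀ z κ, f z κ ≤ M) (z : ℕ) :
    (∑' κ, w1 z * w2 κ * f z κ) ≤ w1 z * M := by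
  have := Summable.tsum_le_tsum (f := fun κ => w1 z * w2 κ * f z κ) (g := fun κ => w1 z * M * w2 κ)
    (fun κ => by
      calc w1 z * w2 κ * f z κ ≤ w1 z * w2 κ * M :=
            mul_le_mul_of_nonneg_left (hM z κ) (mul_nonneg (h1n z) (h2n κ))
        _ = w1 z * M * w2 κ := by ring)
    (inner_summable' h1n h2n h2s h0 hM z) (h2s.mul_left (w1 z * M))
  rwa [tsum_mul_left, h2t, mul_one] at this

lemma outer_summable' (h1n : ∀ z, 0 ≤ w1 z) (h2n : ∀ κ, 0 ≤ w2 κ)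
    (h1s : Summable w1) (h2s : Summable w2) (h2t : ∑' κ, w2 κ = 1)
    {f : ℕ → ℕ → ℝ} (h0 : ∀ z κ, 0 ≤ f z κ) (hM : ∀ z κ, f z κ ≤ M) :
    Summable (fun z => ∑' κ, w1 z * w2 κ * f z κ) := by
  refine Summable.of_nonneg_of_le
    (fun z => tsum_nonneg (fun κ => mul_nonneg (mul_nonneg (h1n z) (h2n κ)) (h0 z κ)))
    (fun z => inner_tsum_le' h1n h2n h2s h2t h0 hM z) (h1s.mul_right M)

lemma tsum2_nonneg' (h1n : ∀ z, 0 ≤ w1 z) (h2n : ∀ κ, 0 ≤ w2 κ)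
    {f : ℕ → ℕ → ℝ} (h0 : ∀ z κ, 0 ≤ f z κ) :
    0 ≤ ∑' z, ∑' κ, w1 z * w2 κ * f z κ :=
  tsum_nonneg (fun z => tsum_nonneg (fun κ => mul_nonneg (mul_nonneg (h1n z) (h2n κ)) (h0 z κ)))

lemma tsum2_le' (h1n : ∀ z, 0 ≤ w1 z) (h2n : ∀ κ, 0 ≤ w2 κ)
    (h1s : Summable w1) (h2s : Summable w2)
    (h1t : ∑' z, w1 z = 1) (h2t : ∑' κ, w2 κ = 1)
    {f : ℕ → ℕ → ℝ} (h0 : ∀ z κ, 0 ≤ f z κ) (hM : ∀ z κ, f z κ ≤ M) :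
    (∑' z, ∑' κ, w1 z * w2 κ * f z κ) ≤ M := by
  have := Summable.tsum_le_tsum (f := fun z => ∑' κ, w1 z * w2 κ * f z κ) (g := fun z => w1 z * M)
    (fun z => inner_tsum_le' h1n h2n h2s h2t h0 hM z)
    (outer_summable' h1n h2n h1s h2s h2t h0 hM) (h1s.mul_right M)
  rwa [tsum_mul_right, h1t, one_mul] at this

lemma tsum2_mono' (h1n : ∀ z, 0 ≤ w1 z) (h2n : ∀ κ, 0 ≤ w2 κ)
    (h1s : Summable w1) (h2s : Summable w2)
    (h1t : ∑' z, w1 z = 1) (h2t : ∑' κ, w2 κ = 1)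
    {f g : ℕ → ℕ → ℝ} (h0 : ∀ z κ, 0 ≤ f z κ) (hfg : ∀ z κ, f z κ ≤ g z κ)
    (hM : ∀ z κ, g z κ ≤ M) :
    (∑' z, ∑' κ, w1 z * w2 κ * f z κ) ≤ ∑' z, ∑' κ, w1 z * w2 κ * g z κ := by
  have h0g : ∀ z κ, 0 ≤ g z κ := fun z κ => (h0 z κ).trans (hfg z κ)
  have hMf : ∀ z κ, f z κ ≤ M := fun z κ => (hfg z κ).trans (hM z κ)
  refine Summable.tsum_le_tsum (fun z => ?_)
    (outer_summable' h1n h2n h1s h2s h2t h0 hMf)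
    (outer_summable' h1n h2n h1s h2s h2t h0g hM)
  exact Summable.tsum_le_tsum
    (fun κ => mul_le_mul_of_nonneg_left (hfg z κ) (mul_nonneg (h1n z) (h2n κ)))
    (inner_summable' h1n h2n h2s h0 hMf z)
    (inner_summable' h1n h2n h2s h0g hM z)

end Weights

lemma pt_pos {β0 : ℝ} (hβ0 : 0 < β0) (N t : ℕ) : 0 < pt β0 N t := by
  have h1 : (0:ℝ) < β0 + (N:ℝ)*(t:ℝ) := by positivity
  exact div_pos h1 (by linarith)

lemma pt_lt_one {β0 : ℝ} (hβ0 : 0 < β0) (N t : ℕ) : pt β0 N t < 1 := by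
  have h1 : (0:ℝ) < β0 + (N:ℝ)*(t:ℝ) := by positivity
  rw [pt, div_lt_one (by linarith)]
  linarith

section EZKfacts
variable {α0 β0 : ℝ} {N : ℕ}

lemma EZK_nonneg (hα0 : 0 < α0) (hβ0 : 0 < β0) (hN : 1 ≤ N) (t k : ℕ) {f : ℕ → ℕ → ℝ} (h0 : ∀ z κ, 0 ≤ f z κ) : 0 ≤ EZK α0 β0 N t k f := by
  have hp0 := pt_pos hβ0 N t
  have hp1 := pt_lt_one hβ0 N t
  have hr1 : (0:ℝ) ≤ α0 + (k:ℝ) := by positivity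
  have hr2 : (0:ℝ) ≤ ((N:ℝ) - 1) * (α0 + (k:ℝ)) := by
    have : (1:ℝ) ≤ (N:ℝ) := by exact_mod_cast hN
    have : (0:ℝ) ≤ (N:ℝ) - 1 := by linarith
    positivity
  exact tsum2_nonneg' (NB_nonneg hr1 hp0 hp1) (NB_nonneg hr2 hp0 hp1) h0

lemma EZK_le_const (hα0 : 0 < α0) (hβ0 : 0 < β0) (hN : 1 ≤ N) (t k : ℕ) {f : ℕ → ℕ → ℝ} {M : ℝ} (h0 : ∀ z κ, 0 ≤ f z κ) (hM : ∀ z κ, f z κ ≤ M) :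
    EZK α0 β0 N t k f ≤ M := by
  have hp0 := pt_pos hβ0 N t
  have hp1 := pt_lt_one hβ0 N t
  have hr1 : (0:ℝ) ≤ α0 + (k:ℝ) := by positivity
  have hr2 : (0:ℝ) ≤ ((N:ℝ) - 1) * (α0 + (k:ℝ)) := by
    have : (1:ℝ) ≤ (N:ℝ) := by exact_mod_cast hN
    have : (0:ℝ) ≤ (N:ℝ) - 1 := by linarith
    positivity
  exact tsum2_le' (NB_nonneg hr1 hp0 hp1) (NB_nonneg hr2 hp0 hp1)
    (NB_summable hr1 hp0 hp1) (NB_summable hr2 hp0 hp1)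
    (NB_tsum_one hr1 hp0 hp1) (NB_tsum_one hr2 hp0 hp1) h0 hM

lemma EZK_mono (hα0 : 0 < α0) (hβ0 : 0 < β0) (hN : 1 ≤ N) (t k : ℕ) {f g : ℕ → ℕ → ℝ} {M : ℝ} (h0 : ∀ z κ, 0 ≤ f z κ)
    (hfg : ∀ z κ, f z κ ≤ g z κ) (hM : ∀ z κ, g z κ ≤ M) :
    EZK α0 β0 N t k f ≤ EZK α0 β0 N t k g := by
  have hp0 := pt_pos hβ0 N t
  have hp1 := pt_lt_one hβ0 N t
  have hr1 : (0:ℝ) ≤ α0 + (k:ℝ) := by positivity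
  have hr2 : (0:ℝ) ≤ ((N:ℝ) - 1) * (α0 + (k:ℝ)) := by
    have : (1:ℝ) ≤ (N:ℝ) := by exact_mod_cast hN
    have : (0:ℝ) ≤ (N:ℝ) - 1 := by linarith
    positivity
  exact tsum2_mono' (NB_nonneg hr1 hp0 hp1) (NB_nonneg hr2 hp0 hp1)
    (NB_summable hr1 hp0 hp1) (NB_summable hr2 hp0 hp1)
    (NB_tsum_one hr1 hp0 hp1) (NB_tsum_one hr2 hp0 hp1) h0 hfg hM

end EZKfacts


/-- Existence of a control limit `δ` with `0 < δ ≤ ξ`: preventive replacement is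
optimal at `(x,k)` with `x < ξ` iff `δ ≤ x`. -/
theorem control_limit_exists
    (α0 β0 : ℝ) (hα0 : 0 < α0) (hβ0 : 0 < β0)
    (N T : ℕ) (hN : 1 ≤ N) (hT : 1 ≤ T)
    (ξ : ℕ) (hξ : 1 ≤ ξ)
    (cp cu : ℝ) (hcp : 0 < cp) (hcpcu : cp < cu)
    (V : ℕ → ℕ → ℕ → ℝ)
    (hVT : ∀ x k, V T x k = if ξ ≤ x then cu else 0)
    (hVfail : ∀ t, t < T → ∀ x k, ξ ≤ x →
      V t x k = cu + EZK α0 β0 N t k (fun z κ => V (t + 1) z (k + z + κ)))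
    (hVop : ∀ t, t < T → ∀ x k, x < ξ →
      V t x k =
        min (cp + EZK α0 β0 N t k (fun z κ => V (t + 1) z (k + z + κ)))
          (EZK α0 β0 N t k (fun z κ => V (t + 1) (x + z) (k + z + κ)))) :
    ∀ t, t < T → ∀ k : ℕ, ∃ δ : ℕ, 0 < δ ∧ δ ≤ ξ ∧
      ∀ x : ℕ, x < ξ →
        ((cp + EZK α0 β0 N t k (fun z κ => V (t + 1) z (k + z + κ)) ≤
            EZK α0 β0 N t k (fun z κ => V (t + 1) (x + z) (k + z + κ))) ↔ δ ≤ x) := by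
  classical
  have hcu : 0 < cu := hcp.trans hcpcu
  -- bounds on V
  have hbound : ∀ d t, t + d = T → ∀ x k, 0 ≤ V t x k ∧ V t x k ≤ ((d:ℝ)+1) * cu := by
    intro d
    induction d with
    | zero =>
      intro t ht x k
      have hteq : t = T := by omega
      subst hteq
      rw [hVT]
      push_cast
      split_ifs <;> constructor <;> linarith
    | succ d ih =>
      intro t htd x k
      have htT : t < T := by omega
      have ht1 : (t+1) + d = T := by omega
      have hf0 : ∀ z κ, 0 ≤ V (t+1) z (k+z+κ) := fun z κ => (ih (t+1) ht1 z (k+z+κ)).1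
      have hfM : ∀ z κ, V (t+1) z (k+z+κ) ≤ ((d:ℝ)+1)*cu :=
        fun z κ => (ih (t+1) ht1 z (k+z+κ)).2
      have hE1 := EZK_nonneg hα0 hβ0 hN t k hf0
      have hE2 := EZK_le_const hα0 hβ0 hN t k hf0 hfM
      by_cases hx : ξ ≤ x
      · rw [hVfail t htT x k hx]
        push_cast
        constructor <;> linarith
      · push_neg at hx
        rw [hVop t htT x k hx]
        have hg0 : ∀ z κ, 0 ≤ V (t+1) (x+z) (k+z+κ) := fun z κ => (ih (t+1) ht1 _ _).1
        have hgM : ∀ z κ, V (t+1) (x+z) (k+z+κ) ≤ ((d:ℝ)+1)*cu := fun z κ => (ih (t+1) ht1 _ _).2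
        have hE3 := EZK_nonneg hα0 hβ0 hN t k hg0
        have hE4 := EZK_le_const hα0 hβ0 hN t k hg0 hgM
        push_cast
        constructor
        · exact le_min (by linarith) hE3
        · refine (min_le_left _ _).trans ?_
          linarith
  -- monotonicity of V in its first argument
  have hmono : ∀ d t, t + d = T → ∀ k x y, x ≤ y → V t x k ≤ V t y k := by
    intro d
    induction d with
    | zero =>
      intro t ht k x y hxy
      have hteq : t = T := by omega
      subst hteq
      rw [hVT, hVT]
      split_ifs with h1 h2
      · exact le_refl _
      · omega
      · linarith
      · exact le_refl _
    | succ d ih =>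
      intro t htd k x y hxy
      have htT : t < T := by omega
      have ht1 : (t+1) + d = T := by omega
      by_cases hy : y < ξ
      · have hx : x < ξ := lt_of_le_of_lt hxy hy
        rw [hVop t htT x k hx, hVop t htT y k hy]
        refine min_le_min (le_refl _) ?_
        exact EZK_mono hα0 hβ0 hN t k (M := ((d:ℝ)+1)*cu)
          (fun z κ => (hbound d (t+1) ht1 _ _).1)
          (fun z κ => ih (t+1) ht1 _ _ _ (by omega))
          (fun z κ => (hbound d (t+1) ht1 _ _).2)
      · push_neg at hy
        by_cases hx : x < ξ
        · rw [hVop t htT x k hx, hVfail t htT y k hy]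
          refine (min_le_left _ _).trans ?_
          linarith
        · push_neg at hx
          rw [hVfail t htT x k hx, hVfail t htT y k hy]
  -- the main argument
  intro t htT k
  have ht1 : (t+1) + (T - (t+1)) = T := by omega
  set d := T - (t+1) with hd
  have hGmono : ∀ x y : ℕ, x ≤ y →
      EZK α0 β0 N t k (fun z κ => V (t+1) (x+z) (k+z+κ)) ≤
        EZK α0 β0 N t k (fun z κ => V (t+1) (y+z) (k+z+κ)) := by
    intro x y hxy
    exact EZK_mono hα0 hβ0 hN t k (M := ((d:ℝ)+1)*cu)
      (fun z κ => (hbound d (t+1) ht1 _ _).1)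
      (fun z κ => hmono d (t+1) ht1 _ _ _ (by omega))
      (fun z κ => (hbound d (t+1) ht1 _ _).2)
  have hG0 : EZK α0 β0 N t k (fun z κ => V (t+1) (0+z) (k+z+κ))
      = EZK α0 β0 N t k (fun z κ => V (t+1) z (k+z+κ)) := by
    have : (fun z κ => V (t+1) (0+z) (k+z+κ)) = fun z κ => V (t+1) z (k+z+κ) := by
      funext z κ; rw [zero_add]
    rw [this]
  have hnot0 : ¬ (cp + EZK α0 β0 N t k (fun z κ => V (t+1) z (k+z+κ)) ≤
      EZK α0 β0 N t k (fun z κ => V (t+1) (0+z) (k+z+κ))) := by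
    rw [hG0]
    linarith
  by_cases hex : ∃ x : ℕ, x < ξ ∧
      cp + EZK α0 β0 N t k (fun z κ => V (t+1) z (k+z+κ)) ≤
        EZK α0 β0 N t k (fun z κ => V (t+1) (x+z) (k+z+κ))
  · refine ⟨Nat.find hex, ?_, (Nat.find_spec hex).1.le, fun x hx => ?_⟩
    · rcases Nat.eq_zero_or_pos (Nat.find hex) with h0 | h0
      · exfalso
        have hspec := (Nat.find_spec hex).2
        rw [h0] at hspec
        exact hnot0 hspec
      · exact h0
    · constructor
      · intro hcond
        exact Nat.find_le ⟨hx, hcond⟩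
      · intro hδx
        exact le_trans (Nat.find_spec hex).2 (hGmono _ _ hδx)
  · push_neg at hex
    refine ⟨ξ, hξ, le_refl _, fun x hx => ?_⟩
    constructor
    · intro hcond
      exact absurd hcond (not_le.mpr (hex x hx))
    · intro h
      omega
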